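/- Let C be a preadditive category with a trace τ valued in an abelian group A, and define the τ-Euler characteristic of a bounded complex Ω over C by χ_τ(Ω) := Σᵣ (−1)ʳ τ(I_{Ωʳ}). If two bounded complexes Ωₐ and Ω_b are homotopy equivalent, then χ_τ(Ωₐ) = χ_τ(Ω_b). -/

import Mathlib

open CategoryTheory CategoryTheory.Limits

section Aux

variable {C : Type*} [Category C] [Preadditive C] {A : Type*} [AddCommGroup A]
  (τ : ∀ X : C, (X ⟶ X) → A)
  (hadd : ∀ (X : C) (f g : X ⟶ X), τ X (f + g) = τ X f + τ X g)
  (htr : ∀ (X Y : C) (F : X ⟶ Y) (G : Y ⟶ X), τ X (F ≫ G) = τ Y (G ≫ F))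

include hadd in
lemma tau_zero' (X : C) : τ X 0 = 0 := by
  have h := hadd X 0 0
  rw [add_zero] at h
  exact (add_eq_left.mp h.symm)

include hadd in
lemma tau_isZero' {X : C} (hX : IsZero X) (f : X ⟶ X) : τ X f = 0 := by
  rw [hX.eq_of_src f 0]; exact tau_zero' τ hadd X

lemma sum_support_eq (c : ℤ → A) (s : Finset ℤ) (hc : ∀ r ∉ s, c r = 0)
    {S : Finset ℤ} (hS : s ⊆ S) : ∑ r ∈ S, c r = ∑ r ∈ s, c r :=
  (Finset.sum_subset hS (fun x _ hx => hc x hx)).symm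

include hadd htr in
lemma aux_key (K : CochainComplex C ℤ) (f : K ⟶ K) (H : Homotopy f (𝟙 K))
    (s T : Finset ℤ) (hs : ∀ r ∉ s, IsZero (K.X r)) (hsT : s ⊆ T)
    (hsT' : ∀ r ∈ s, r - 1 ∈ T) :
    ∑ r ∈ T, ((r.negOnePow : ℤ) • τ (K.X r) (𝟙 (K.X r)))
      = ∑ r ∈ T, ((r.negOnePow : ℤ) • τ (K.X r) (f.f r)) := by
  set a : ℤ → A := fun r => τ (K.X r) (K.d r (r+1) ≫ H.hom (r+1) r) with ha
  set b : ℤ → A := fun r => τ (K.X r) (H.hom r (r-1) ≫ K.d (r-1) r) with hb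
  have hfr : ∀ r, τ (K.X r) (f.f r) = a r + b r + τ (K.X r) (𝟙 (K.X r)) := by
    intro r
    have hc := H.comm r
    rw [dNext_eq H.hom (show (ComplexShape.up ℤ).Rel r (r+1) by simp),
      prevD_eq H.hom (show (ComplexShape.up ℤ).Rel (r-1) r by simp)] at hc
    rw [hc, hadd, hadd]
    rfl
  have ha0 : ∀ r ∉ s, a r = 0 := fun r hr => tau_isZero' τ hadd (hs r hr) _
  have hb0 : ∀ r ∉ s, b r = 0 := fun r hr => tau_isZero' τ hadd (hs r hr) _
  have hab : ∀ r, a r = b (r+1) := by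
    intro r
    simp only [ha, hb]
    rw [show r + 1 - 1 = r by omega]
    exact htr _ _ _ _
  have key : (∑ r ∈ T, (r.negOnePow : ℤ) • a r) + (∑ r ∈ T, (r.negOnePow : ℤ) • b r) = 0 := by
    have h1 : (∑ r ∈ T, (r.negOnePow : ℤ) • a r)
        = -(∑ r ∈ T.image (· + 1), (r.negOnePow : ℤ) • b r) := by
      rw [Finset.sum_image (by intro x _ y _ h; have h' : x + 1 = y + 1 := h; omega)]
      rw [← Finset.sum_neg_distrib]
      refine Finset.sum_congr rfl fun r _ => ?_
      rw [hab r, Int.negOnePow_succ]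
      push_cast
      rw [neg_smul, neg_neg]
    have h2 : (∑ r ∈ T.image (· + 1), (r.negOnePow : ℤ) • b r)
        = ∑ r ∈ T, (r.negOnePow : ℤ) • b r := by
      have hsub : s ⊆ T.image (· + 1) := by
        intro r hr
        simp only [Finset.mem_image]
        exact ⟨r - 1, hsT' r hr, by omega⟩
      rw [sum_support_eq _ s (fun r hr => by rw [hb0 r hr, smul_zero]) hsub,
        sum_support_eq _ s (fun r hr => by rw [hb0 r hr, smul_zero]) hsT]
    rw [h1, h2, neg_add_cancel]
  calc ∑ r ∈ T, ((r.negOnePow : ℤ) • τ (K.X r) (𝟙 (K.X r)))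
      = (∑ r ∈ T, (r.negOnePow : ℤ) • a r) + (∑ r ∈ T, (r.negOnePow : ℤ) • b r)
        + ∑ r ∈ T, ((r.negOnePow : ℤ) • τ (K.X r) (𝟙 (K.X r))) := by rw [key, zero_add]
    _ = ∑ r ∈ T, ((r.negOnePow : ℤ) • τ (K.X r) (f.f r)) := by
        rw [← Finset.sum_add_distrib, ← Finset.sum_add_distrib]
        refine Finset.sum_congr rfl fun r _ => ?_
        rw [hfr r, smul_add, smul_add]

end Aux

/-- Homotopy equivalent bounded complexes over a preadditive category with a trace `τ`
have equal τ-Euler characteristics `χ_τ(Ω) = Σᵣ (−1)ʳ τ(I_{Ωʳ})`. -/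
theorem euler_characteristic_homotopy_invariant {C : Type*} [Category C] [Preadditive C]
    {A : Type*} [AddCommGroup A]
    (τ : ∀ X : C, (X ⟶ X) → A)
    (hadd : ∀ (X : C) (f g : X ⟶ X), τ X (f + g) = τ X f + τ X g)
    (htr : ∀ (X Y : C) (F : X ⟶ Y) (G : Y ⟶ X), τ X (F ≫ G) = τ Y (G ≫ F))
    (Ka Kb : CochainComplex C ℤ)
    -- boundedness: Ka and Kb are supported on the finite sets sa and sb
    (sa sb : Finset ℤ)
    (hsa : ∀ r : ℤ, r ∉ sa → IsZero (Ka.X r)) (hsb : ∀ r : ℤ, r ∉ sb → IsZero (Kb.X r))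
    (h : Nonempty (HomotopyEquiv Ka Kb)) :
    ∑ r ∈ sa, ((r.negOnePow : ℤ) • τ (Ka.X r) (𝟙 (Ka.X r)))
      = ∑ r ∈ sb, ((r.negOnePow : ℤ) • τ (Kb.X r) (𝟙 (Kb.X r))) := by
  obtain ⟨e⟩ := h
  set U : Finset ℤ := sa ∪ sb with hU
  set T : Finset ℤ := U ∪ U.image (· - 1) with hT
  have hUT : U ⊆ T := Finset.subset_union_left
  have haT : sa ⊆ T := (Finset.subset_union_left).trans hUT
  have hbT : sb ⊆ T := (Finset.subset_union_right).trans hUT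
  have haT' : ∀ r ∈ sa, r - 1 ∈ T := fun r hr =>
    Finset.mem_union_right _ (Finset.mem_image.mpr ⟨r, Finset.mem_union_left _ hr, rfl⟩)
  have hbT' : ∀ r ∈ sb, r - 1 ∈ T := fun r hr =>
    Finset.mem_union_right _ (Finset.mem_image.mpr ⟨r, Finset.mem_union_right _ hr, rfl⟩)
  have za : ∀ r ∉ sa, ((r.negOnePow : ℤ) • τ (Ka.X r) (𝟙 (Ka.X r))) = 0 := fun r hr => by
    rw [tau_isZero' τ hadd (hsa r hr), smul_zero]
  have zb : ∀ r ∉ sb, ((r.negOnePow : ℤ) • τ (Kb.X r) (𝟙 (Kb.X r))) = 0 := fun r hr => by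
    rw [tau_isZero' τ hadd (hsb r hr), smul_zero]
  calc ∑ r ∈ sa, ((r.negOnePow : ℤ) • τ (Ka.X r) (𝟙 (Ka.X r)))
      = ∑ r ∈ T, ((r.negOnePow : ℤ) • τ (Ka.X r) (𝟙 (Ka.X r))) :=
        (sum_support_eq _ sa za haT).symm
    _ = ∑ r ∈ T, ((r.negOnePow : ℤ) • τ (Ka.X r) ((e.hom ≫ e.inv).f r)) :=
        aux_key τ hadd htr Ka _ e.homotopyHomInvId sa T hsa haT haT'
    _ = ∑ r ∈ T, ((r.negOnePow : ℤ) • τ (Kb.X r) ((e.inv ≫ e.hom).f r)) := by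
        refine Finset.sum_congr rfl fun r _ => ?_
        simp only [HomologicalComplex.comp_f]
        rw [htr]
    _ = ∑ r ∈ T, ((r.negOnePow : ℤ) • τ (Kb.X r) (𝟙 (Kb.X r))) :=
        (aux_key τ hadd htr Kb _ e.homotopyInvHomId sb T hsb hbT hbT').symm
    _ = ∑ r ∈ sb, ((r.negOnePow : ℤ) • τ (Kb.X r) (𝟙 (Kb.X r))) :=
        sum_support_eq _ sb zb hbT
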